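/- Let G be a graph with a proper coloring c using colors in a linearly ordered set. Define φ on Hom(K_2, G) as follows: for (X, Y) in Hom(K_2, G), let n(X,Y) = |c(X)| + |c(Y)| (the total number of colors appearing on X plus colors appearing on Y), and set φ(X, Y) = +n(X,Y) if (c(X), c(Y)) is lexicographically ordered in a fixed total order on pairs of color sets refining cardinality of c(X), and −n(X,Y) otherwise. Then for every proper coloring one obtains χ(G) ≥ Xind(Hom(K_2, G)) + 2; equivalently, the number of colors of any proper coloring of a graph G with at least one edge is at least Xind(Hom(K_2, G)) + 2. -/

import Mathlib

/-- The underlying set of the free `Z₂`-poset `Q n`: the elements `±1, …, ±(n+1)`,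
encoded as nonzero integers of absolute value at most `n + 1`. -/
def QElem (n : ℕ) : Type := {i : ℤ // i ≠ 0 ∧ |i| ≤ n + 1}

/-- The partial order of `Q n`: `p < q` iff `|p| < |q|`. -/
instance (n : ℕ) : PartialOrder (QElem n) where
  le p q := p = q ∨ |p.1| < |q.1|
  le_refl p := Or.inl rfl
  le_trans p q r h1 h2 := by
    rcases h1 with rfl | h1
    · exact h2
    · rcases h2 with rfl | h2
      · exact Or.inr h1
      · exact Or.inr (h1.trans h2)
  le_antisymm p q h1 h2 := by
    rcases h1 with rfl | h1
    · rfl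
    · rcases h2 with rfl | h2
      · rfl
      · exact absurd (h1.trans h2) (lt_irrefl _)

/-- The involution `i ↦ -i` of `Q n`. -/
def QNeg (n : ℕ) : QElem n → QElem n :=
  fun p => ⟨-p.1, neg_ne_zero.mpr p.2.1, by rw [abs_neg]; exact p.2.2⟩

/-- An order-preserving `Z₂`-map between two posets equipped with involutions. -/
def IsZ2Map {P Q : Type*} [PartialOrder P] [PartialOrder Q] (νP : P → P) (νQ : Q → Q)
    (f : P → Q) : Prop :=
  Monotone f ∧ ∀ p, f (νP p) = νQ (f p)

open Classical in
/-- The cross-index of a free `Z₂`-poset `(P, ν)` : the minimum `n` such that there is an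
order-preserving `Z₂`-map from `P` to `Q n`, with the convention `-1` for the empty poset. -/
noncomputable def XindZ (P : Type*) [PartialOrder P] (νP : P → P) : ℤ :=
  if Nonempty P then ((sInf {n : ℕ | ∃ f : P → QElem n, IsZ2Map νP (QNeg n) f} : ℕ) : ℤ)
  else -1

/-- The Hom complex `Hom(K₂, G)`: pairs `(X, Y)` of nonempty disjoint vertex sets such that
`G[X, Y]` is complete bipartite, ordered by componentwise inclusion. -/
def HomK2 {V : Type*} (G : SimpleGraph V) : Type _ :=
  {XY : Set V × Set V // XY.1.Nonempty ∧ XY.2.Nonempty ∧ Disjoint XY.1 XY.2 ∧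
    ∀ a ∈ XY.1, ∀ b ∈ XY.2, G.Adj a b}

instance {V : Type*} (G : SimpleGraph V) : PartialOrder (HomK2 G) :=
  Subtype.partialOrder _

/-- The involution `(X, Y) ↦ (Y, X)` of the Hom complex. -/
def HomK2Swap {V : Type*} (G : SimpleGraph V) : HomK2 G → HomK2 G :=
  fun p => ⟨(p.1.2, p.1.1), p.2.2.1, p.2.1, p.2.2.2.1.symm,
    fun b hb a ha => (p.2.2.2.2 a ha b hb).symm⟩

open Classical in
noncomputable def pairVal (m : ℕ) (A B : Set (Fin m)) : ℤ :=
  (if ∃ i ∈ A, (i : ℕ) = sInf ((fun i : Fin m => (i : ℕ)) '' (A ∪ B)) then 1 else -1)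
    * ((A.ncard + B.ncard - 1 : ℕ) : ℤ)

lemma pairVal_abs (m : ℕ) (A B : Set (Fin m)) :
    |pairVal m A B| = ((A.ncard + B.ncard - 1 : ℕ) : ℤ) := by
  unfold pairVal
  split <;> simp [abs_mul]

lemma pairVal_swap (m : ℕ) (A B : Set (Fin m)) (hA : A.Nonempty) (hd : Disjoint A B) :
    pairVal m B A = - pairVal m A B := by
  classical
  unfold pairVal
  rw [Set.union_comm B A, Nat.add_comm B.ncard]
  set j := sInf ((fun i : Fin m => (i : ℕ)) '' (A ∪ B)) with hj
  have hne : ((fun i : Fin m => (i : ℕ)) '' (A ∪ B)).Nonempty :=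
    (hA.mono Set.subset_union_left).image _
  obtain ⟨i0, hi0, hi0j⟩ := Nat.sInf_mem hne
  have hiff : (∃ i ∈ B, (i : ℕ) = j) ↔ ¬ (∃ i ∈ A, (i : ℕ) = j) := by
    constructor
    · rintro ⟨i1, hi1, h1⟩ ⟨i2, hi2, h2⟩
      have he : i1 = i2 := Fin.val_injective (h1.trans h2.symm)
      exact Set.disjoint_left.mp hd hi2 (he ▸ hi1)
    · intro h
      rcases hi0 with h0 | h0
      · exact absurd ⟨i0, h0, hi0j⟩ h
      · exact ⟨i0, h0, hi0j⟩
  by_cases hc : ∃ i ∈ A, (i : ℕ) = j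
  · rw [if_pos hc, if_neg (not_not_intro hc ∘ hiff.mp)]
    ring
  · rw [if_neg hc, if_pos (hiff.mpr hc)]
    ring


/-- For every graph `G` with at least one edge, the number of colors of any
proper coloring of `G` is at least `Xind(Hom(K₂, G)) + 2`; in particular
`χ(G) ≥ Xind(Hom(K₂, G)) + 2`. -/
theorem chromatic_ge_Xind_add_two {V : Type*} [Fintype V] (G : SimpleGraph V)
    {a b : V} (hab : G.Adj a b) (m : ℕ) (C : G.Coloring (Fin m)) :
    XindZ (HomK2 G) (HomK2Swap G) + 2 ≤ (m : ℤ) := by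
  classical
  have hvalid : C a ≠ C b := C.valid hab
  have hm2 : 2 ≤ m := by
    by_contra h
    push_neg at h
    interval_cases m
    · exact (C a).elim0
    · exact hvalid (Subsingleton.elim _ _)
  -- color sets
  set A : HomK2 G → Set (Fin m) := fun p => C '' p.1.1 with hA
  set B : HomK2 G → Set (Fin m) := fun p => C '' p.1.2 with hB
  have hAne : ∀ p, (A p).Nonempty := fun p => p.2.1.image _
  have hBne : ∀ p, (B p).Nonempty := fun p => p.2.2.1.image _
  have hdisj : ∀ p : HomK2 G, Disjoint (A p) (B p) := by
    intro p
    rw [Set.disjoint_left]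
    rintro c ⟨x, hx, rfl⟩ ⟨y, hy, hxy⟩
    exact C.valid (p.2.2.2.2 x hx y hy) hxy.symm
  have hcard : ∀ p : HomK2 G, 2 ≤ (A p).ncard + (B p).ncard ∧ (A p).ncard + (B p).ncard ≤ m := by
    intro p
    constructor
    · have h1 : 0 < (A p).ncard := (Set.ncard_pos (Set.toFinite _)).mpr (hAne p)
      have h2 : 0 < (B p).ncard := (Set.ncard_pos (Set.toFinite _)).mpr (hBne p)
      omega
    · have := Set.ncard_union_eq (hdisj p) (Set.toFinite _) (Set.toFinite _)
      rw [← this]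
      calc (A p ∪ B p).ncard ≤ (Set.univ : Set (Fin m)).ncard :=
            Set.ncard_le_ncard (Set.subset_univ _) Set.finite_univ
        _ = m := by simp [Set.ncard_univ]
  -- the map
  set n : ℕ := m - 2 with hn
  have hmem : n ∈ {k : ℕ | ∃ f : HomK2 G → QElem k, IsZ2Map (HomK2Swap G) (QNeg k) f} := by
    refine ⟨fun p => ⟨pairVal m (A p) (B p), ?_, ?_⟩, ?_, ?_⟩
    · intro h0
      have := pairVal_abs m (A p) (B p)
      rw [h0, abs_zero] at this
      have := (hcard p).1
      omega
    · rw [pairVal_abs]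
      have h1 := (hcard p).2
      have : ((A p).ncard + (B p).ncard - 1 : ℕ) ≤ n + 1 := by omega
      calc ((((A p).ncard + (B p).ncard - 1 : ℕ)) : ℤ) ≤ ((n + 1 : ℕ) : ℤ) := by exact_mod_cast this
        _ = (n : ℤ) + 1 := by push_cast; ring
    · -- monotone
      intro p q hpq
      have hXY : p.1.1 ⊆ q.1.1 ∧ p.1.2 ⊆ q.1.2 := hpq
      have hAq : A p ⊆ A q := Set.image_mono hXY.1
      have hBq : B p ⊆ B q := Set.image_mono hXY.2
      have hcA : (A p).ncard ≤ (A q).ncard := Set.ncard_le_ncard hAq (Set.toFinite _)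
      have hcB : (B p).ncard ≤ (B q).ncard := Set.ncard_le_ncard hBq (Set.toFinite _)
      rcases eq_or_lt_of_le (Nat.add_le_add hcA hcB) with heq | hlt
      · -- sets equal
        have heA : A p = A q := Set.eq_of_subset_of_ncard_le hAq (by omega) (Set.toFinite _)
        have heB : B p = B q := Set.eq_of_subset_of_ncard_le hBq (by omega) (Set.toFinite _)
        left
        apply Subtype.ext
        show pairVal m (A p) (B p) = pairVal m (A q) (B q)
        rw [heA, heB]
      · right
        rw [pairVal_abs, pairVal_abs]
        have h2 := (hcard p).1
        have : ((A p).ncard + (B p).ncard - 1 : ℕ) < ((A q).ncard + (B q).ncard - 1 : ℕ) := by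
          omega
        exact_mod_cast this
    · -- equivariant
      intro p
      apply Subtype.ext
      show pairVal m (A (HomK2Swap G p)) (B (HomK2Swap G p)) = - pairVal m (A p) (B p)
      have h1 : A (HomK2Swap G p) = B p := rfl
      have h2 : B (HomK2Swap G p) = A p := rfl
      rw [h1, h2]
      exact pairVal_swap m (A p) (B p) (hAne p) (hdisj p)
  have hPne : Nonempty (HomK2 G) := by
    refine ⟨⟨({a}, {b}), ⟨a, rfl⟩, ⟨b, rfl⟩, ?_, ?_⟩⟩
    · simp [Set.disjoint_singleton_left, G.ne_of_adj hab]
    · intro x hx y hy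
      simp only [Set.mem_singleton_iff] at hx hy
      subst hx; subst hy; exact hab
  have hinf : sInf {k : ℕ | ∃ f : HomK2 G → QElem k, IsZ2Map (HomK2Swap G) (QNeg k) f} ≤ n :=
    Nat.sInf_le hmem
  rw [XindZ, if_pos hPne]
  have : (↑(sInf {k : ℕ | ∃ f : HomK2 G → QElem k, IsZ2Map (HomK2Swap G) (QNeg k) f}) : ℤ) ≤ (n : ℤ) := by
    exact_mod_cast hinf
  omega
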